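/- Let m, n be positive integers with m > n, and let ε > 0. Then the limit as ε → 0 of the contour integral (1/(2πi)) ∮_{|z|=ε} (m z^{m-1})/(z^m - z̄^n) dz equals 0, and the limit of (1/(2πi)) ∮_{|z|=ε} (-n z̄^{n-1})/(z^m - z̄^n) dz̄ equals -n. -/

import Mathlib

open Complex Filter

/-- The contour integral `∮_{|z-c|=R} f(z) dz̄`, defined analogously to `circleIntegral`
but against the conjugate differential `dz̄`. -/
noncomputable def circleIntegralConj (f : ℂ → ℂ) (c : ℂ) (R : ℝ) : ℂ :=
  ∫ θ in (0:ℝ)..(2 * Real.pi),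
    (starRingEnd ℂ) (deriv (circleMap c R) θ) * f (circleMap c R θ)

/-- For positive integers `m > n`, as `ε → 0⁺`,
`(1/(2πi)) ∮_{|z|=ε} (m z^{m-1})/(z^m - z̄^n) dz → 0` and
`(1/(2πi)) ∮_{|z|=ε} (-n z̄^{n-1})/(z^m - z̄^n) dz̄ → -n`. -/
lemma denom_lb {n m : ℕ} (hn : 0 < n) (hmn : n < m) {ε : ℝ} (hε : 0 < ε)
    (hε2 : ε ≤ 1/2) {z : ℂ} (hz : ‖z‖ = ε) :
    ε ^ n / 2 ≤ ‖z ^ m - (starRingEnd ℂ) z ^ n‖ := by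
  have h1 : ‖(starRingEnd ℂ) z ^ n‖ = ε ^ n := by
    rw [norm_pow, RCLike.norm_conj, hz]
  have h2 : ‖z ^ m‖ = ε ^ m := by rw [norm_pow, hz]
  have hkey : ε ^ m ≤ ε ^ n / 2 := by
    have h3 : ε ^ (m - n) ≤ ε ^ 1 :=
      pow_le_pow_of_le_one hε.le (by linarith) (by omega)
    have h4 : ε ^ m = ε ^ n * ε ^ (m - n) := by
      rw [← pow_add]; congr 1; omega
    have h5 : (0:ℝ) ≤ ε ^ n := by positivity
    nlinarith [pow_pos hε n]
  have := norm_sub_norm_le ((starRingEnd ℂ) z ^ n) (z ^ m)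
  rw [norm_sub_rev] at this
  rw [h1, h2] at this
  linarith

lemma denom_ne {n m : ℕ} (hn : 0 < n) (hmn : n < m) {ε : ℝ} (hε : 0 < ε)
    (hε2 : ε ≤ 1/2) {z : ℂ} (hz : ‖z‖ = ε) :
    z ^ m - (starRingEnd ℂ) z ^ n ≠ 0 := by
  have := denom_lb hn hmn hε hε2 hz
  intro h
  rw [h, norm_zero] at this
  have : (0:ℝ) < ε ^ n / 2 := by positivity
  linarith

theorem stmt0 (m n : ℕ) (hn : 0 < n) (hmn : n < m) :
    Tendsto (fun ε : ℝ =>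
        (1 / (2 * Real.pi * I)) *
          ∮ z in C(0, ε), ((m : ℂ) * z ^ (m - 1)) / (z ^ m - (starRingEnd ℂ) z ^ n))
      (nhdsWithin 0 (Set.Ioi 0)) (nhds 0) ∧
    Tendsto (fun ε : ℝ =>
        (1 / (2 * Real.pi * I)) *
          circleIntegralConj
            (fun z => (-(n : ℂ) * (starRingEnd ℂ) z ^ (n - 1)) /
              (z ^ m - (starRingEnd ℂ) z ^ n)) 0 ε)
      (nhdsWithin 0 (Set.Ioi 0)) (nhds (-(n : ℂ))) := by
  have hπ := Real.pi_pos
  have hcoef : ‖(1 : ℂ) / (2 * (Real.pi:ℂ) * I)‖ = (2 * Real.pi)⁻¹ := by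
    rw [norm_div, norm_one, norm_mul, norm_mul, Complex.norm_I, Complex.norm_ofNat,
      Complex.norm_real, Real.norm_eq_abs, abs_of_pos hπ]
    ring
  have hmem : Set.Ioc (0:ℝ) (1/2) ∈ nhdsWithin (0:ℝ) (Set.Ioi 0) :=
    Ioc_mem_nhdsGT_of_mem (by norm_num)
  -- the common bound function
  have hg : ∀ C : ℝ, Tendsto (fun ε : ℝ => C * ε ^ (m - n))
      (nhdsWithin 0 (Set.Ioi 0)) (nhds 0) := by
    intro C
    have hc : Continuous (fun ε : ℝ => C * ε ^ (m - n)) := by fun_prop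
    have h0 := (hc.tendsto 0).mono_left (nhdsWithin_le_nhds (s := Set.Ioi (0:ℝ)))
    simpa [zero_pow (show m - n ≠ 0 by omega)] using h0
  constructor
  · apply squeeze_zero_norm' (a := fun ε : ℝ => 2 * m * ε ^ (m - n)) _ (hg _)
    filter_upwards [hmem] with ε hε
    obtain ⟨hε0, hε2⟩ := hε
    have hεn : (0:ℝ) < ε ^ n := by positivity
    have hbound : ∀ z ∈ Metric.sphere (0:ℂ) ε,
        ‖((m : ℂ) * z ^ (m - 1)) / (z ^ m - (starRingEnd ℂ) z ^ n)‖
          ≤ 2 * m * ε ^ (m - 1) / ε ^ n := by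
      intro z hz
      rw [mem_sphere_zero_iff_norm] at hz
      have hD := denom_lb hn hmn hε0 hε2 hz
      have hD0 : (0:ℝ) < ε ^ n / 2 := by positivity
      rw [norm_div, norm_mul, norm_pow, hz, Complex.norm_natCast]
      calc (m:ℝ) * ε ^ (m-1) / ‖z ^ m - (starRingEnd ℂ) z ^ n‖
          ≤ (m:ℝ) * ε ^ (m-1) / (ε ^ n / 2) := by
            apply div_le_div_of_nonneg_left _ hD0 hD
            positivity
        _ = 2 * m * ε ^ (m-1) / ε ^ n := by ring
    have hInt := circleIntegral.norm_integral_le_of_norm_le_const (c := (0:ℂ)) (R := ε)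
      hε0.le hbound
    rw [norm_mul, hcoef]
    calc (2 * Real.pi)⁻¹ * ‖∮ z in C(0, ε), ((m : ℂ) * z ^ (m - 1)) / (z ^ m - (starRingEnd ℂ) z ^ n)‖
        ≤ (2 * Real.pi)⁻¹ * (2 * Real.pi * ε * (2 * m * ε ^ (m - 1) / ε ^ n)) := by
          apply mul_le_mul_of_nonneg_left hInt
          positivity
      _ = 2 * m * (ε * ε ^ (m-1)) / ε ^ n := by
          field_simp
      _ = 2 * m * ε ^ (m - n) := by
          rw [← pow_succ']
          have h1 : m - 1 + 1 = m := by omega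
          rw [h1]
          have hpow : ε ^ m = ε ^ (m - n) * ε ^ n := by
            rw [← pow_add]; congr 1; omega
          rw [hpow, mul_div_assoc,
            mul_div_cancel_right₀ _ (ne_of_gt (by positivity : (0:ℝ) < ε ^ n))]
  · rw [← tendsto_sub_nhds_zero_iff]
    apply squeeze_zero_norm' (a := fun ε : ℝ => 2 * n * ε ^ (m - n)) _ (hg _)
    filter_upwards [hmem] with ε hε
    obtain ⟨hε0, hε2⟩ := hε
    set z : ℝ → ℂ := circleMap 0 ε with hzdef
    have hzn : ∀ θ, ‖z θ‖ = ε := fun θ => by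
      simp [hzdef, norm_circleMap_zero, abs_of_pos hε0]
    have hDne : ∀ θ, (z θ) ^ m - (starRingEnd ℂ) (z θ) ^ n ≠ 0 := fun θ =>
      denom_ne hn hmn hε0 hε2 (hzn θ)
    -- pointwise identity
    have hpt : ∀ θ : ℝ,
        (starRingEnd ℂ) (deriv (circleMap 0 ε) θ) *
          ((-(n : ℂ) * (starRingEnd ℂ) (z θ) ^ (n - 1)) /
            ((z θ) ^ m - (starRingEnd ℂ) (z θ) ^ n))
        = I * n * (z θ) ^ m / ((z θ) ^ m - (starRingEnd ℂ) (z θ) ^ n) - I * n := by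
      intro θ
      rw [deriv_circleMap]
      have hc : (starRingEnd ℂ) (circleMap 0 ε θ * I) = (starRingEnd ℂ) (z θ) * (-I) := by
        simp [hzdef]
      have hpow : (starRingEnd ℂ) (z θ) * (starRingEnd ℂ) (z θ) ^ (n-1)
          = (starRingEnd ℂ) (z θ) ^ n := by
        rw [← pow_succ']
        congr 1
        omega
      have hD := hDne θ
      calc (starRingEnd ℂ) (circleMap 0 ε θ * I) *
          ((-(n : ℂ) * (starRingEnd ℂ) (z θ) ^ (n - 1)) /
            ((z θ) ^ m - (starRingEnd ℂ) (z θ) ^ n))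
          = I * n * ((starRingEnd ℂ) (z θ) * (starRingEnd ℂ) (z θ) ^ (n-1)) /
              ((z θ) ^ m - (starRingEnd ℂ) (z θ) ^ n) := by
            rw [hc]; ring
        _ = I * n * (starRingEnd ℂ) (z θ) ^ n /
              ((z θ) ^ m - (starRingEnd ℂ) (z θ) ^ n) := by rw [hpow]
        _ = I * n * (z θ) ^ m / ((z θ) ^ m - (starRingEnd ℂ) (z θ) ^ n) - I * n := by
            field_simp
            ring
    have hzc : Continuous z := continuous_circleMap 0 ε
    have hcont : Continuous (fun θ : ℝ =>
        I * n * (z θ) ^ m / ((z θ) ^ m - (starRingEnd ℂ) (z θ) ^ n)) := by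
      exact (continuous_const.mul (hzc.pow m)).div
        ((hzc.pow m).sub ((Complex.continuous_conj.comp hzc).pow n)) hDne
    have hCIC : circleIntegralConj
        (fun z => (-(n : ℂ) * (starRingEnd ℂ) z ^ (n - 1)) /
          (z ^ m - (starRingEnd ℂ) z ^ n)) 0 ε
        = (∫ θ in (0:ℝ)..(2*Real.pi),
            I * n * (z θ) ^ m / ((z θ) ^ m - (starRingEnd ℂ) (z θ) ^ n))
          - 2 * Real.pi * I * n := by
      unfold circleIntegralConj
      rw [intervalIntegral.integral_congr (g := fun θ =>
        I * n * (z θ) ^ m / ((z θ) ^ m - (starRingEnd ℂ) (z θ) ^ n) - I * n)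
        (fun θ _ => hpt θ)]
      rw [intervalIntegral.integral_sub (hcont.intervalIntegrable _ _)
        intervalIntegrable_const, intervalIntegral.integral_const]
      rw [sub_zero]
      rw [Complex.real_smul]
      push_cast
      ring
    have key : (1 / (2 * (Real.pi:ℂ) * I)) *
          circleIntegralConj
            (fun z => (-(n : ℂ) * (starRingEnd ℂ) z ^ (n - 1)) /
              (z ^ m - (starRingEnd ℂ) z ^ n)) 0 ε - (-(n:ℂ))
        = (1 / (2 * (Real.pi:ℂ) * I)) *
          ∫ θ in (0:ℝ)..(2*Real.pi),
            I * n * (z θ) ^ m / ((z θ) ^ m - (starRingEnd ℂ) (z θ) ^ n) := by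
      rw [hCIC]
      have h2πI : (2 * (Real.pi:ℂ) * I) ≠ 0 := by
        simp [Real.pi_ne_zero, I_ne_zero]
      field_simp
      ring
    rw [key, norm_mul, hcoef]
    have hptbd : ∀ θ ∈ Set.uIoc (0:ℝ) (2*Real.pi),
        ‖I * n * (z θ) ^ m / ((z θ) ^ m - (starRingEnd ℂ) (z θ) ^ n)‖
          ≤ 2 * n * ε ^ m / ε ^ n := by
      intro θ _
      have hD := denom_lb hn hmn hε0 hε2 (hzn θ)
      have hD0 : (0:ℝ) < ε ^ n / 2 := by positivity
      rw [norm_div, norm_mul, norm_mul, Complex.norm_I, norm_pow, hzn θ,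
        Complex.norm_natCast, one_mul]
      calc (n:ℝ) * ε ^ m / ‖(z θ) ^ m - (starRingEnd ℂ) (z θ) ^ n‖
          ≤ (n:ℝ) * ε ^ m / (ε ^ n / 2) := by
            apply div_le_div_of_nonneg_left _ hD0 hD
            positivity
        _ = 2 * n * ε ^ m / ε ^ n := by ring
    have hInt := intervalIntegral.norm_integral_le_of_norm_le_const hptbd
    rw [sub_zero, abs_of_pos (by positivity : (0:ℝ) < 2*Real.pi)] at hInt
    calc (2 * Real.pi)⁻¹ * ‖∫ θ in (0:ℝ)..(2*Real.pi),
            I * n * (z θ) ^ m / ((z θ) ^ m - (starRingEnd ℂ) (z θ) ^ n)‖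
        ≤ (2 * Real.pi)⁻¹ * (2 * n * ε ^ m / ε ^ n * (2 * Real.pi)) := by
          apply mul_le_mul_of_nonneg_left hInt
          positivity
      _ = 2 * n * ε ^ m / ε ^ n := by field_simp
      _ = 2 * n * ε ^ (m - n) := by
          have hpow : ε ^ m = ε ^ (m - n) * ε ^ n := by
            rw [← pow_add]; congr 1; omega
          rw [hpow, mul_div_assoc,
            mul_div_cancel_right₀ _ (ne_of_gt (by positivity : (0:ℝ) < ε ^ n))]
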